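/- arXiv:1412.8044 — 2 statements merged into one kernel-verified Lean document; each statement's English description precedes it below -/
import Mathlib

section
/- For any formal power series f, g in t·Q[[t,q]], with P[f](t) = Σ_{k≥0} f(q^k t) and R[f](t) = Σ_{k≥1} f(q^k t), one has the mixed product formula: R[f]·P[g] = R[R[f]·g] + R[f·R[g]] + R[f]·g + R[f·g]. -/
open PowerSeries

noncomputable section

/-- `Q[[q]]`. -/
abbrev Qq : Type := PowerSeries ℚ

/-- `Q[[t,q]]`, viewed as power series in `t` with coefficients in `Q[[q]]`. -/
abbrev QQtq : Type := PowerSeries Qq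

/-- The geometric series `Σ_{k≥0} q^{k n}` (set to `0` at `n = 0`, where the sum diverges;
this value is never used on `t·Q[[t,q]]`). -/
def geomP (n : ℕ) : Qq :=
  if n = 0 then 0 else PowerSeries.mk fun m => if n ∣ m then (1 : ℚ) else 0

/-- The geometric series `Σ_{k≥1} q^{k n}` (set to `0` at `n = 0`). -/
def geomR (n : ℕ) : Qq :=
  if n = 0 then 0 else PowerSeries.mk fun m => if n ∣ m ∧ m ≠ 0 then (1 : ℚ) else 0

/-- `P[f](t) = Σ_{k≥0} f(q^k t)`: on the `t^n`-coefficient this multiplies by `Σ_{k≥0} q^{kn}`. -/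
def Pop (f : QQtq) : QQtq :=
  PowerSeries.mk fun n => geomP n * PowerSeries.coeff (R := Qq) n f

/-- `R[f](t) = Σ_{k≥1} f(q^k t)`: on the `t^n`-coefficient this multiplies by `Σ_{k≥1} q^{kn}`. -/
def Rop (f : QQtq) : QQtq :=
  PowerSeries.mk fun n => geomR n * PowerSeries.coeff (R := Qq) n f

/-- The q-expanding operator `E[f](t) = f(qt)`. -/
def Eop (f : QQtq) : QQtq :=
  PowerSeries.mk fun n => (PowerSeries.X : Qq) ^ n * PowerSeries.coeff (R := Qq) n f

/-- The q-difference operator `D = id - E`, i.e. `D[f](t) = f(t) - f(qt)`. -/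
def Dop (f : QQtq) : QQtq := f - Eop f

/-- `y(t) = t/(1-t) = Σ_{ℓ≥1} t^ℓ`. -/
def yser : QQtq := PowerSeries.mk fun n => if n = 0 then (0 : Qq) else 1

lemma geomR_mul_cancel {n : ℕ} (hn : n ≠ 0) :
    geomR n * (1 - (X : Qq) ^ n) = X ^ n := by
  ext m
  rw [mul_sub, mul_one, map_sub, coeff_mul_X_pow']
  simp only [geomR, if_neg hn, coeff_mk, coeff_X_pow]
  by_cases h : n ≤ m
  · by_cases hd : n ∣ m
    · by_cases hmn : m = n
      · subst hmn; simp [hn, Nat.pos_of_ne_zero hn]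
      · have h1 : n ∣ m - n := Nat.dvd_sub hd dvd_rfl
        have hm0 : m ≠ 0 := by omega
        have hmn0 : m - n ≠ 0 := by
          rcases hd with ⟨c, rfl⟩
          rcases Nat.lt_or_ge c 2 with hc | hc
          · interval_cases c <;> omega
          · have : 2 * n ≤ n * c := by nlinarith
            omega
        simp [hd, hm0, h1, hmn0, hmn, h]
    · have h2 : ¬ n ∣ (m - n) := fun hh => hd (by
        have := Nat.dvd_add hh (dvd_refl n)
        rwa [Nat.sub_add_cancel h] at this)
      have hmn : m ≠ n := by rintro rfl; exact hd dvd_rfl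
      simp [hd, h2, h, hmn]
  · have hmn : m ≠ n := by omega
    have h3 : ¬(n ∣ m ∧ m ≠ 0) := by
      rintro ⟨hd, hm⟩
      exact h (Nat.le_of_dvd (Nat.pos_of_ne_zero hm) hd)
    simp [h, h3, hmn]

lemma geomP_eq {n : ℕ} (hn : n ≠ 0) : geomP n = 1 + geomR n := by
  ext m
  simp only [geomP, geomR, if_neg hn, map_add, coeff_mk, coeff_one]
  by_cases hm : m = 0
  · subst hm; simp
  · simp [hm]

lemma isUnit_one_sub_X_pow {n : ℕ} (hn : n ≠ 0) : IsUnit ((1 : Qq) - X ^ n) := by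
  rw [PowerSeries.isUnit_iff_constantCoeff]
  simp [hn, constantCoeff_X]


lemma geomR_mul_geomR {i j : ℕ} (hi : i ≠ 0) (hj : j ≠ 0) :
    geomR i * geomR j = geomR (i + j) * (geomR i + geomR j + 1) := by
  have hn : i + j ≠ 0 := by omega
  have hu : IsUnit (((1 : Qq) - X ^ i) * ((1 - X ^ j) * (1 - X ^ (i + j)))) :=
    (isUnit_one_sub_X_pow hi).mul ((isUnit_one_sub_X_pow hj).mul (isUnit_one_sub_X_pow hn))
  apply hu.mul_left_cancel
  have eA := geomR_mul_cancel hi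
  have eC := geomR_mul_cancel hj
  have eD := geomR_mul_cancel hn
  have hx : (X : Qq) ^ i * X ^ j = X ^ (i + j) := (pow_add X i j).symm
  calc ((1 : Qq) - X ^ i) * ((1 - X ^ j) * (1 - X ^ (i + j))) * (geomR i * geomR j)
      = (geomR i * (1 - X ^ i)) * (geomR j * (1 - X ^ j)) * (1 - X ^ (i + j)) := by ring
    _ = X ^ i * X ^ j * (1 - X ^ (i + j)) := by rw [eA, eC]
    _ = X ^ (i + j) * (1 - X ^ (i + j)) := by rw [hx]
    _ = X ^ (i + j) * (1 - X ^ i * X ^ j) := by rw [hx]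
    _ = (X ^ (i + j)) * ((X ^ i) * (1 - X ^ j) + (X ^ j) * (1 - X ^ i)
          + (1 - X ^ i) * (1 - X ^ j)) := by ring
    _ = (geomR (i + j) * (1 - X ^ (i + j))) * ((geomR i * (1 - X ^ i)) * (1 - X ^ j)
          + (geomR j * (1 - X ^ j)) * (1 - X ^ i) + (1 - X ^ i) * (1 - X ^ j)) := by
            rw [eA, eC, eD]
    _ = ((1 : Qq) - X ^ i) * ((1 - X ^ j) * (1 - X ^ (i + j)))
          * (geomR (i + j) * (geomR i + geomR j + 1)) := by ring

lemma key {i j : ℕ} (hi : i ≠ 0) (hj : j ≠ 0) :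
    geomR i * geomP j = geomR (i + j) * geomR i + geomR (i + j) * geomR j
      + geomR i + geomR (i + j) := by
  rw [geomP_eq hj]
  linear_combination geomR_mul_geomR hi hj

/-- mixed product formula for `R` and `P` on `t·Q[[t,q]]`. -/
theorem Rop_mul_Pop (f g : QQtq)
    (hf : PowerSeries.coeff (R := Qq) 0 f = 0) (hg : PowerSeries.coeff (R := Qq) 0 g = 0) :
    Rop f * Pop g = Rop (Rop f * g) + Rop (f * Rop g) + Rop f * g + Rop (f * g) := by
  ext n : 1
  simp only [Rop, Pop, map_add, coeff_mk, coeff_mul, Finset.mul_sum]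
  rw [← Finset.sum_add_distrib, ← Finset.sum_add_distrib, ← Finset.sum_add_distrib]
  refine Finset.sum_congr rfl ?_
  rintro ⟨i, j⟩ hp
  have hij : i + j = n := Finset.HasAntidiagonal.mem_antidiagonal.mp hp
  by_cases hi : i = 0
  · subst hi; simp [hf]
  by_cases hj : j = 0
  · subst hj; simp [hg]
  subst hij
  have := key hi hj
  linear_combination (coeff (R := Qq) i f * coeff (R := Qq) j g) * this
end
end

section
/- Let ℓ ≥ 1 and α_1,…,α_ℓ, β_1,…,β_ℓ be positive integers. For the operator R[f](t) := Σ_{k≥1} f(q^k t) and y(t) = t/(1−t), the iterated expression R^{α_1}[y^{β_1}·R^{α_2}[y^{β_2}·…·R^{α_ℓ}[y^{β_ℓ}]…]](t) equals the multiple sum over j_1 ≥ β_1, …, j_ℓ ≥ β_ℓ and k_1 ≥ α_1, …, k_ℓ ≥ α_ℓ of the product over r = 1,…,ℓ of binom(j_r−1, β_r−1)·binom(k_r−1, α_r−1)·q^{k_r·(j_r + j_{r+1} + … + j_ℓ)}·t^{j_r}. -/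
open PowerSeries

noncomputable section

/-- The iterated operator expression `R^{α_1}[y^{β_1}·R^{α_2}[y^{β_2}·…·R^{α_ℓ}[y^{β_ℓ}]…]]`,
encoded by the list of pairs `[(α_1,β_1),…,(α_ℓ,β_ℓ)]`. -/
def iterRY : List (ℕ × ℕ) → QQtq
  | [] => 1
  | p :: rest => Rop^[p.1] (yser ^ p.2 * iterRY rest)


def gser (R : Type*) [Semiring R] (n : ℕ) : PowerSeries R :=
  PowerSeries.mk fun m => if n ∣ m ∧ m ≠ 0 then 1 else 0

lemma coeff_gser {R : Type*} [Semiring R] (n i : ℕ) :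
    PowerSeries.coeff (R := R) i (gser R n) = if n ∣ i ∧ i ≠ 0 then 1 else 0 :=
  PowerSeries.coeff_mk _ _

lemma sum_range_multiples {M : Type*} [AddCommMonoid M] {n : ℕ} (hn : 0 < n) (f : ℕ → M)
    (h : ∀ i, ¬ n ∣ i → f i = 0) (m : ℕ) :
    ∑ i ∈ Finset.range (m+1), f i = ∑ u ∈ Finset.range (m/n + 1), f (n*u) := by
  rw [← Finset.sum_filter_of_ne (p := fun i => n ∣ i)
    (fun x hx hfx => by by_contra hc; exact hfx (h x hc))]
  refine Finset.sum_nbij' (fun i => i / n) (fun u => n * u) ?_ ?_ ?_ ?_ ?_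
  · intro i hi
    simp only [Finset.mem_filter, Finset.mem_range] at hi ⊢
    exact Nat.lt_succ_of_le (Nat.div_le_div_right (by omega))
  · intro u hu
    simp only [Finset.mem_filter, Finset.mem_range] at hu ⊢
    have h1 : u ≤ m / n := by omega
    have h2 : n*u ≤ m := le_trans (Nat.mul_le_mul_left n h1) (Nat.mul_div_le m n)
    exact ⟨by omega, Dvd.intro u rfl⟩
  · intro i hi
    simp only [Finset.mem_filter] at hi
    exact Nat.mul_div_cancel' hi.2
  · intro u _
    exact Nat.mul_div_cancel_left u hn
  · intro i hi
    simp only [Finset.mem_filter] at hi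
    rw [Nat.mul_div_cancel' hi.2]

lemma L1 (K a : ℕ) (ha : 0 < a) :
    ∑ u ∈ Finset.range (K+1), (if 1 ≤ u ∧ a ≤ K - u then (K - u - 1).choose (a-1) else 0)
      = if a + 1 ≤ K then (K-1).choose a else 0 := by
  rw [← Finset.sum_range_reflect]
  simp only [Nat.add_sub_cancel]
  have h1 : ∀ u ∈ Finset.range (K+1),
      (if 1 ≤ K - u ∧ a ≤ K - (K - u) then (K - (K - u) - 1).choose (a-1) else 0)
        = if a ≤ u ∧ u < K then (u-1).choose (a-1) else 0 := by
    intro u hu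
    simp only [Finset.mem_range] at hu
    have h2 : K - (K - u) = u := by omega
    rw [h2]
    congr 1
    simp only [eq_iff_iff]
    omega
  rw [Finset.sum_congr rfl h1, Finset.sum_ite, Finset.sum_const_zero, add_zero]
  have h2 : (Finset.range (K+1)).filter (fun u => a ≤ u ∧ u < K) = Finset.Ico a K := by
    ext u; simp only [Finset.mem_filter, Finset.mem_range, Finset.mem_Ico]; omega
  rw [h2]
  by_cases h : a + 1 ≤ K
  · rw [if_pos h]
    have h3 : ∑ u ∈ Finset.Ico a K, (u-1).choose (a-1)
        = ∑ v ∈ Finset.Icc (a-1) (K-2), v.choose (a-1) := by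
      refine Finset.sum_nbij' (fun u => u - 1) (fun v => v + 1) ?_ ?_ ?_ ?_ ?_
      · intro u hu; simp only [Finset.mem_Ico, Finset.mem_Icc] at *; omega
      · intro v hv; simp only [Finset.mem_Ico, Finset.mem_Icc] at *; omega
      · intro u hu; simp only [Finset.mem_Ico] at hu; omega
      · intro v _; omega
      · intro u _; rfl
    rw [h3, Nat.sum_Icc_choose]
    congr 1 <;> omega
  · rw [if_neg h, Finset.Ico_eq_empty (by omega), Finset.sum_empty]

lemma coeff_gser_pow {R : Type*} [CommSemiring R] {n : ℕ} (hn : 0 < n) {a : ℕ} (ha : 0 < a)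
    (m : ℕ) :
    PowerSeries.coeff (R := R) m (gser R n ^ a)
      = if n ∣ m ∧ a ≤ m / n then (((m/n - 1).choose (a-1) : ℕ) : R) else 0 := by
  induction a generalizing m with
  | zero => omega
  | succ a ih =>
    rcases Nat.eq_zero_or_pos a with rfl | hapos
    · rw [pow_one, coeff_gser]
      by_cases hd : n ∣ m
      · obtain ⟨k, rfl⟩ := hd
        rw [Nat.mul_div_cancel_left _ hn]
        have hd' : n ∣ n * k := Dvd.intro k rfl
        simp only [hd', true_and, ne_eq, Nat.mul_eq_zero, not_or]
        split_ifs <;> simp_all <;> omega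
      · rw [if_neg (by tauto), if_neg (by tauto)]
    · rw [pow_succ, mul_comm, PowerSeries.coeff_mul,
        Finset.Nat.sum_antidiagonal_eq_sum_range_succ_mk]
      have key : ∀ i, ¬ n ∣ i →
          PowerSeries.coeff (R := R) i (gser R n) * PowerSeries.coeff (R := R) (m - i) (gser R n ^ a) = 0 := by
        intro i hi
        rw [coeff_gser, if_neg (by tauto), zero_mul]
      rw [sum_range_multiples hn _ key]
      by_cases hm : n ∣ m
      · obtain ⟨K, rfl⟩ := hm
        have hKdiv : n * K / n = K := Nat.mul_div_cancel_left K hn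
        rw [hKdiv]
        have h4 : ∀ u ∈ Finset.range (K + 1),
            PowerSeries.coeff (R := R) (n*u) (gser R n) *
              PowerSeries.coeff (R := R) (n*K - n*u) (gser R n ^ a)
            = ((if 1 ≤ u ∧ a ≤ K - u then (K - u - 1).choose (a-1) else 0 : ℕ) : R) := by
          intro u hu
          simp only [Finset.mem_range] at hu
          have hsub : n*K - n*u = n*(K-u) := by rw [Nat.mul_sub]
          rw [hsub, ih hapos, coeff_gser]
          have he1 : n * (K - u) / n = K - u := Nat.mul_div_cancel_left _ hn
          rw [he1]
          have hd1 : n ∣ n * u := Dvd.intro u rfl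
          have hd2 : n ∣ n * (K - u) := Dvd.intro (K-u) rfl
          have hne : n ≠ 0 := by omega
          simp only [hd1, hd2, true_and, ne_eq, Nat.mul_eq_zero, not_or]
          split_ifs <;> first
            | (exfalso; omega)
            | (push_cast; ring)
        rw [Finset.sum_congr rfl h4, ← Nat.cast_sum, L1 K a hapos]
        have hdK : n ∣ n * K := Dvd.intro K rfl
        simp only [hdK, true_and, Nat.add_sub_cancel, apply_ite (Nat.cast : ℕ → R),
          Nat.cast_zero]
      · rw [if_neg (by tauto)]
        refine Finset.sum_eq_zero fun u hu => ?_
        rw [ih hapos, coeff_gser]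
        by_cases h2 : n ∣ (m - n*u) ∧ a ≤ (m - n*u) / n
        · exfalso
          have h3 : 1 ≤ (m - n*u) / n := le_trans hapos h2.2
          have h4 : n ≤ m - n*u := (Nat.one_le_div_iff hn).mp h3
          have h5 : n ∣ m := by
            have h6 := Nat.dvd_add h2.1 (Dvd.intro u rfl : n ∣ n*u)
            rwa [Nat.sub_add_cancel (by omega)] at h6
          exact hm h5
        · rw [if_neg h2, mul_zero]

lemma yser_eq : yser = gser Qq 1 := by
  ext j
  rw [yser, gser, coeff_mk, coeff_mk]
  by_cases h : j = 0 <;> simp [h]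

lemma geomR_eq {n : ℕ} (hn : 0 < n) : geomR n = gser ℚ n := by
  rw [geomR, if_neg hn.ne', gser]

lemma coeff_Rop_iter (a : ℕ) (f : QQtq) (n : ℕ) :
    PowerSeries.coeff (R := Qq) n (Rop^[a] f) = geomR n ^ a * PowerSeries.coeff (R := Qq) n f := by
  induction a with
  | zero => rw [Function.iterate_zero_apply, pow_zero, one_mul]
  | succ a ih =>
    rw [Function.iterate_succ_apply', Rop, coeff_mk, ih, pow_succ]
    ring

lemma coeff_yser_pow {b : ℕ} (hb : 0 < b) (j : ℕ) :
    PowerSeries.coeff (R := Qq) j (yser ^ b)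
      = ((if b ≤ j then (j-1).choose (b-1) else 0 : ℕ) : Qq) := by
  rw [yser_eq, coeff_gser_pow one_pos hb]
  simp only [Nat.div_one, Nat.one_dvd, true_and, apply_ite (Nat.cast : ℕ → Qq), Nat.cast_zero]

lemma coeff_geomR_pow_mul {n a : ℕ} (hn : 0 < n) (ha : 0 < a) (f : Qq) (m : ℕ) :
    PowerSeries.coeff (R := ℚ) m (geomR n ^ a * f)
      = ∑ k ∈ Finset.range (m+1), if a ≤ k ∧ n*k ≤ m
          then ((k-1).choose (a-1) : ℚ) * PowerSeries.coeff (R := ℚ) (m - n*k) f else 0 := by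
  rw [geomR_eq hn, PowerSeries.coeff_mul, Finset.Nat.sum_antidiagonal_eq_sum_range_succ_mk]
  have key : ∀ i, ¬ n ∣ i →
      PowerSeries.coeff (R := ℚ) i (gser ℚ n ^ a) * PowerSeries.coeff (R := ℚ) (m-i) f = 0 := by
    intro i hi; rw [coeff_gser_pow hn ha, if_neg (by tauto), zero_mul]
  rw [sum_range_multiples hn _ key]
  have hsub : Finset.range (m/n + 1) ⊆ Finset.range (m+1) := by
    intro k hk
    simp only [Finset.mem_range] at hk ⊢
    have := Nat.div_le_self m n
    omega
  rw [← Finset.sum_subset hsub]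
  · refine Finset.sum_congr rfl fun k hk => ?_
    simp only [Finset.mem_range] at hk
    have hkm : n * k ≤ m := by
      have : k ≤ m / n := by omega
      have h2 := (Nat.le_div_iff_mul_le hn).mp this
      rwa [Nat.mul_comm] at h2

    rw [coeff_gser_pow hn ha]
    have hd : n ∣ n * k := Dvd.intro k rfl
    have he : n * k / n = k := Nat.mul_div_cancel_left k hn
    rw [he]
    simp only [hd, true_and, hkm, and_true]
    split_ifs <;> simp
  · intro k hk1 hk2
    simp only [Finset.mem_range] at hk1 hk2
    have : ¬ (n * k ≤ m) := by
      intro hle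
      have : k ≤ m / n := (Nat.le_div_iff_mul_le hn).mpr (by rw [Nat.mul_comm] at hle; omega)
      omega

    rw [if_neg (by tauto)]

/-- The index finset containing the support. -/
def Sfin (ℓ n m : ℕ) : Finset ((Fin ℓ → ℕ) × (Fin ℓ → ℕ)) :=
  (Fintype.piFinset fun _ => Finset.range (n+1)) ×ˢ (Fintype.piFinset fun _ => Finset.range (m+1))

/-- The summand. -/
def Fterm (ℓ : ℕ) (α β : Fin ℓ → ℕ) (n m : ℕ) (jk : (Fin ℓ → ℕ) × (Fin ℓ → ℕ)) : ℚ :=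
  if (∀ r, β r ≤ jk.1 r) ∧ (∀ r, α r ≤ jk.2 r)
      ∧ (∑ r, jk.1 r) = n
      ∧ (∑ r, jk.2 r * ∑ s ∈ Finset.Ici r, jk.1 s) = m then
    (∏ r, ((jk.1 r - 1).choose (β r - 1) * (jk.2 r - 1).choose (α r - 1)) : ℚ)
  else 0

lemma Fterm_support {ℓ : ℕ} {α β : Fin ℓ → ℕ} {n m : ℕ} (hβ : ∀ r, 0 < β r)
    {jk : (Fin ℓ → ℕ) × (Fin ℓ → ℕ)} (h : Fterm ℓ α β n m jk ≠ 0) : jk ∈ Sfin ℓ n m := by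
  rw [Fterm] at h
  by_cases hc : (∀ r, β r ≤ jk.1 r) ∧ (∀ r, α r ≤ jk.2 r)
      ∧ (∑ r, jk.1 r) = n ∧ (∑ r, jk.2 r * ∑ s ∈ Finset.Ici r, jk.1 s) = m
  · obtain ⟨h1, h2, h3, h4⟩ := hc
    rw [Sfin, Finset.mem_product]
    constructor
    · rw [Fintype.mem_piFinset]
      intro r
      rw [Finset.mem_range]
      have : jk.1 r ≤ ∑ r, jk.1 r := Finset.single_le_sum (fun _ _ => Nat.zero_le _)
        (Finset.mem_univ r)
      omega
    · rw [Fintype.mem_piFinset]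
      intro r
      rw [Finset.mem_range]
      have h5 : jk.1 r ≤ ∑ s ∈ Finset.Ici r, jk.1 s :=
        Finset.single_le_sum (fun _ _ => Nat.zero_le _) (Finset.mem_Ici.mpr le_rfl)
      have h6 : 1 ≤ ∑ s ∈ Finset.Ici r, jk.1 s := le_trans (le_trans (hβ r) (h1 r)) h5
      have h7 : jk.2 r * ∑ s ∈ Finset.Ici r, jk.1 s
          ≤ ∑ r, jk.2 r * ∑ s ∈ Finset.Ici r, jk.1 s :=
        Finset.single_le_sum (f := fun r => jk.2 r * ∑ s ∈ Finset.Ici r, jk.1 s)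
          (fun _ _ => Nat.zero_le _) (Finset.mem_univ r)
      have h8 : jk.2 r ≤ jk.2 r * ∑ s ∈ Finset.Ici r, jk.1 s :=
        Nat.le_mul_of_pos_right _ h6
      omega
  · exact absurd (if_neg hc) h

lemma Sfin_mono {ℓ n m n' m' : ℕ} (hn : n' ≤ n) (hm : m' ≤ m) :
    Sfin ℓ n' m' ⊆ Sfin ℓ n m := by
  intro jk hjk
  rw [Sfin, Finset.mem_product, Fintype.mem_piFinset, Fintype.mem_piFinset] at hjk ⊢
  refine ⟨fun r => ?_, fun r => ?_⟩ <;>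
    [have := hjk.1 r; have := hjk.2 r] <;> rw [Finset.mem_range] at * <;> omega

lemma sum_Ici_fin {N : ℕ} (g : Fin N → ℕ) (r : Fin N) :
    ∑ s ∈ Finset.Ici r, g s = ∑ s, if r ≤ s then g s else 0 := by
  rw [← Finset.sum_filter]
  congr 1
  ext s
  simp

lemma wsum_cons {N : ℕ} (j0 k0 : ℕ) (J K : Fin N → ℕ) :
    (∑ r : Fin (N+1), (Fin.cons k0 K : Fin (N+1) → ℕ) r
        * ∑ s ∈ Finset.Ici r, (Fin.cons j0 J : Fin (N+1) → ℕ) s)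
      = k0 * (j0 + ∑ s, J s) + ∑ r : Fin N, K r * ∑ s ∈ Finset.Ici r, J s := by
  rw [Fin.sum_univ_succ]
  congr 1
  · rw [Fin.cons_zero]
    congr 1
    rw [sum_Ici_fin, Fin.sum_univ_succ]
    simp only [Fin.zero_le, if_true, Fin.cons_zero, Fin.cons_succ]
  · refine Finset.sum_congr rfl fun r _ => ?_
    rw [Fin.cons_succ]
    congr 1
    rw [sum_Ici_fin, sum_Ici_fin, Fin.sum_univ_succ]
    have h0 : ¬ ((r.succ : Fin (N+1)) ≤ 0) := (Fin.succ_pos r).not_ge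
    rw [if_neg h0, zero_add]
    refine Finset.sum_congr rfl fun s _ => ?_
    rw [Fin.cons_succ]
    congr 1
    simp [Fin.succ_le_succ_iff]

lemma sum_Sfin_succ {ℓ n m : ℕ} (f : (Fin (ℓ+1) → ℕ) × (Fin (ℓ+1) → ℕ) → ℚ) :
    ∑ jk ∈ Sfin (ℓ+1) n m, f jk
      = ∑ p ∈ (Finset.range (n+1)) ×ˢ ((Finset.range (m+1)) ×ˢ Sfin ℓ n m),
          f (Fin.cons p.1 p.2.2.1, Fin.cons p.2.1 p.2.2.2) := by
  refine Finset.sum_nbij' (fun jk => (jk.1 0, (jk.2 0, (Fin.tail jk.1, Fin.tail jk.2))))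
    (fun p => (Fin.cons p.1 p.2.2.1, Fin.cons p.2.1 p.2.2.2)) ?_ ?_ ?_ ?_ ?_
  · intro jk hjk
    rw [Sfin, Finset.mem_product, Fintype.mem_piFinset, Fintype.mem_piFinset] at hjk
    simp only [Finset.mem_product, Fintype.mem_piFinset, Sfin]
    exact ⟨hjk.1 0, hjk.2 0, fun i => hjk.1 i.succ, fun i => hjk.2 i.succ⟩
  · intro p hp
    rw [Finset.mem_product, Finset.mem_product, Sfin, Finset.mem_product,
      Fintype.mem_piFinset, Fintype.mem_piFinset] at hp
    rw [Sfin, Finset.mem_product, Fintype.mem_piFinset, Fintype.mem_piFinset]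
    obtain ⟨h1, h2, h3, h4⟩ := hp
    constructor
    · intro i
      refine Fin.cases ?_ ?_ i
      · simpa using h1
      · intro i; simpa using h3 i
    · intro i
      refine Fin.cases ?_ ?_ i
      · simpa using h2
      · intro i; simpa using h4 i
  · intro jk hjk
    simp [Fin.cons_self_tail]
  · intro p hp
    simp [Fin.tail_cons, Fin.cons_zero]
  · intro jk hjk
    rw [Fin.cons_self_tail, Fin.cons_self_tail]

lemma main_lemma : ∀ (ℓ : ℕ) (α β : Fin ℓ → ℕ), (∀ r, 0 < α r) → (∀ r, 0 < β r) → ∀ n m : ℕ,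
    PowerSeries.coeff (R := ℚ) m (PowerSeries.coeff (R := Qq) n (iterRY (List.ofFn fun r => (α r, β r))))
      = ∑ jk ∈ Sfin ℓ n m, Fterm ℓ α β n m jk := by
  intro ℓ
  induction ℓ with
  | zero =>
    intro α β hα hβ n m
    rw [List.ofFn_zero]
    have h1 : iterRY [] = 1 := rfl
    rw [h1]
    have hS : Sfin 0 n m = {((fun i => i.elim0), (fun i => i.elim0))} := by
      ext jk
      simp only [Finset.mem_singleton, Sfin, Finset.mem_product, Fintype.mem_piFinset]
      constructor
      · intro _
        refine Prod.ext ?_ ?_ <;> funext i <;> exact i.elim0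
      · rintro rfl
        exact ⟨fun i => i.elim0, fun i => i.elim0⟩
    rw [hS, Finset.sum_singleton, Fterm]
    simp only [Finset.univ_eq_empty, Finset.sum_empty, Finset.prod_empty,
      IsEmpty.forall_iff, true_and]
    rw [PowerSeries.coeff_one]
    by_cases hn : n = 0
    · subst hn
      rw [if_pos rfl, PowerSeries.coeff_one]
      by_cases hm : m = 0
      · subst hm; rw [if_pos rfl, if_pos ⟨rfl, rfl⟩]
      · rw [if_neg hm, if_neg (by tauto)]
    · rw [if_neg hn, map_zero, if_neg (by tauto)]
  | succ ℓ ih =>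
    intro α β hα hβ n m
    rw [List.ofFn_succ]
    have h1 : iterRY ((α 0, β 0) :: List.ofFn fun i : Fin ℓ => (α i.succ, β i.succ))
        = Rop^[α 0] (yser ^ β 0
            * iterRY (List.ofFn fun i : Fin ℓ => (α i.succ, β i.succ))) := rfl
    rw [h1, coeff_Rop_iter]
    set T := iterRY (List.ofFn fun i : Fin ℓ => (α i.succ, β i.succ)) with hT
    by_cases hn : n = 0
    · subst hn
      have hz : geomR 0 = 0 := by rw [geomR, if_pos rfl]
      rw [hz, zero_pow (hα 0).ne', zero_mul, map_zero]
      symm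
      refine Finset.sum_eq_zero fun jk hjk => ?_
      rw [Fterm, if_neg]
      rintro ⟨hc1, -, hc3, -⟩
      have h2 : jk.1 0 ≤ ∑ r, jk.1 r :=
        Finset.single_le_sum (fun _ _ => Nat.zero_le _) (Finset.mem_univ 0)
      have h3 := hβ 0
      have h4 := hc1 0
      omega
    · have hn' : 0 < n := Nat.pos_of_ne_zero hn
      rw [coeff_geomR_pow_mul hn' (hα 0)]
      have hf : ∀ m2, m2 ≤ m → PowerSeries.coeff (R := ℚ) m2 (PowerSeries.coeff (R := Qq) n (yser ^ β 0 * T))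
          = ∑ j ∈ Finset.range (n+1),
              ((if β 0 ≤ j then (j-1).choose (β 0 - 1) else 0 : ℕ) : ℚ)
                * ∑ jk ∈ Sfin ℓ n m,
                    Fterm ℓ (fun i => α i.succ) (fun i => β i.succ) (n-j) m2 jk := by
        intro m2 hm2
        rw [PowerSeries.coeff_mul, Finset.Nat.sum_antidiagonal_eq_sum_range_succ_mk, map_sum]
        refine Finset.sum_congr rfl fun j hj => ?_
        rw [coeff_yser_pow (hβ 0), ← nsmul_eq_mul, map_nsmul, nsmul_eq_mul]
        congr 1
        rw [ih (fun i => α i.succ) (fun i => β i.succ)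
          (fun i => hα i.succ) (fun i => hβ i.succ) (n-j) m2]
        refine Finset.sum_subset (Sfin_mono (by omega) hm2) ?_
        intro x _ hx2
        by_contra hne
        exact hx2 (Fterm_support (fun i => hβ i.succ) hne)
      have hL : ∀ k ∈ Finset.range (m+1),
          (if α 0 ≤ k ∧ n*k ≤ m then ((k-1).choose (α 0 - 1) : ℚ)
              * PowerSeries.coeff (R := ℚ) (m - n*k)
                  (PowerSeries.coeff (R := Qq) n (yser ^ β 0 * T)) else 0)
          = ∑ j ∈ Finset.range (n+1), ∑ jk ∈ Sfin ℓ n m,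
              (if α 0 ≤ k ∧ n*k ≤ m then ((k-1).choose (α 0 - 1) : ℚ) else 0)
                * (((if β 0 ≤ j then (j-1).choose (β 0 - 1) else 0 : ℕ) : ℚ)
                    * Fterm ℓ (fun i => α i.succ) (fun i => β i.succ) (n-j) (m - n*k) jk) := by
        intro k _
        by_cases hA : α 0 ≤ k ∧ n*k ≤ m
        · rw [if_pos hA, hf (m - n*k) (by omega), Finset.mul_sum]
          refine Finset.sum_congr rfl fun j _ => ?_
          rw [Finset.mul_sum, Finset.mul_sum]
          refine Finset.sum_congr rfl fun jk _ => ?_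
          rw [if_pos hA]
        · rw [if_neg hA]
          symm
          refine Finset.sum_eq_zero fun j _ => Finset.sum_eq_zero fun jk _ => ?_
          rw [if_neg hA, zero_mul]
      rw [Finset.sum_congr rfl hL, sum_Sfin_succ, Finset.sum_product, Finset.sum_comm]
      refine Finset.sum_congr rfl fun j hj => ?_
      rw [Finset.sum_product]
      refine Finset.sum_congr rfl fun k hk => ?_
      refine Finset.sum_congr rfl fun jk hjk => ?_
      simp only [Finset.mem_range] at hj hk
      dsimp only
      simp only [Fterm, wsum_cons, Fin.sum_cons, Fin.forall_fin_succ, Fin.prod_univ_succ,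
        Fin.cons_zero, Fin.cons_succ]
      have key : ((β 0 ≤ j ∧ ∀ r : Fin ℓ, β r.succ ≤ jk.1 r) ∧
          (α 0 ≤ k ∧ ∀ r : Fin ℓ, α r.succ ≤ jk.2 r) ∧
          (j + ∑ r, jk.1 r) = n ∧
          (k * (j + ∑ s, jk.1 s) + ∑ r, jk.2 r * ∑ s ∈ Finset.Ici r, jk.1 s) = m)
        ↔ ((α 0 ≤ k ∧ n * k ≤ m) ∧ (β 0 ≤ j) ∧
           ((∀ r : Fin ℓ, β r.succ ≤ jk.1 r) ∧ (∀ r : Fin ℓ, α r.succ ≤ jk.2 r) ∧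
            (∑ r, jk.1 r) = n - j ∧
            (∑ r, jk.2 r * ∑ s ∈ Finset.Ici r, jk.1 s) = m - n * k)) := by
        constructor
        · rintro ⟨⟨hB, hD1⟩, ⟨hA1, hD2⟩, hD3, hD4⟩
          have h9 : k * (j + ∑ r, jk.1 r) = n * k := by rw [hD3, Nat.mul_comm]
          exact ⟨⟨hA1, by omega⟩, hB, hD1, hD2, by omega, by omega⟩
        · rintro ⟨⟨hA1, hA2⟩, hB, hC1, hC2, hC3, hC4⟩
          have hjs : j + ∑ r, jk.1 r = n := by omega
          have h9 : k * (j + ∑ r, jk.1 r) = n * k := by rw [hjs, Nat.mul_comm]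
          exact ⟨⟨hB, hC1⟩, ⟨hA1, hC2⟩, hjs, by omega⟩
      rw [if_congr key rfl rfl]
      split_ifs with hh1 hh2 hh3 hh4 <;> first
        | (exact absurd ⟨hh1, hh2, hh3⟩ hh4)
        | (exact absurd hh4.2.2 hh3)
        | (exact absurd hh4.2.1 hh2)
        | (exact absurd hh4.1 hh1)
        | (rename_i hC'; exact absurd hC'.2.2 hh3)
        | (rename_i hC'; exact absurd hC'.2.1 hh2)
        | (rename_i hC'; exact absurd hC'.1 hh1)
        | (push_cast; ring)

/-- the coefficient of `t^n q^m` in the iterated expression equals the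
corresponding multiple sum of products of binomial coefficients. -/
theorem iterRY_coeff (ℓ : ℕ) (hℓ : 0 < ℓ) (α β : Fin ℓ → ℕ)
    (hα : ∀ r, 0 < α r) (hβ : ∀ r, 0 < β r) (n m : ℕ) :
    PowerSeries.coeff (R := ℚ) m
        (PowerSeries.coeff (R := Qq) n (iterRY (List.ofFn fun r => (α r, β r))))
      = ∑' jk : (Fin ℓ → ℕ) × (Fin ℓ → ℕ),
          if (∀ r, β r ≤ jk.1 r) ∧ (∀ r, α r ≤ jk.2 r)
              ∧ (∑ r, jk.1 r) = n
              ∧ (∑ r, jk.2 r * ∑ s ∈ Finset.Ici r, jk.1 s) = m then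
            (∏ r, ((jk.1 r - 1).choose (β r - 1) * (jk.2 r - 1).choose (α r - 1)) : ℚ)
          else 0 := by
  rw [main_lemma ℓ α β hα hβ n m]
  refine (tsum_eq_sum ?_).symm
  intro jk hjk
  by_contra hne
  exact hjk (Fterm_support hβ (by rw [Fterm]; exact hne))
end
end
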